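/- For the wired (no interference) case, the broadcast capacity bound simplifies: if all β_e = 1 and all c_e = 1, then min over proper cuts U of ∑_{e∈E_U} c_e β_e equals min over single-node cuts U_v = V∖{v}, v ≠ r, of the same sum, which equals min_{v ≠ r} d_in(v), the minimum in-degree among non-root nodes — provided G is a DAG rooted at r in which every node is reachable from r. -/
import Mathlib


theorem min_cut_eq_min_indegree {V : Type*} [Fintype V] [DecidableEq V]
    {ι : Type*} [Fintype ι] [DecidableEq ι]
    (src tgt : ι → V) (r : V)
    (hacyc : ∀ v : V, ¬ Relation.TransGen (fun a b => ∃ e : ι, src e = a ∧ tgt e = b) v v)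
    (hconn : ∀ v : V, Relation.ReflTransGen (fun a b => ∃ e : ι, src e = a ∧ tgt e = b) r v)
    (cutVal : Finset V → ℕ)
    (hcut : ∀ U : Finset V,
      cutVal U = (Finset.univ.filter (fun e : ι => src e ∈ U ∧ tgt e ∉ U)).card)
    (din : V → ℕ) (hdin : ∀ v : V, din v = (Finset.univ.filter (fun e : ι => tgt e = v)).card) :
    sInf {c : ℕ | ∃ U : Finset V, r ∈ U ∧ U ≠ Finset.univ ∧ c = cutVal U}
      = sInf {c : ℕ | ∃ v : V, v ≠ r ∧ c = cutVal (Finset.univ.erase v)} ∧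
    sInf {c : ℕ | ∃ v : V, v ≠ r ∧ c = cutVal (Finset.univ.erase v)}
      = sInf {c : ℕ | ∃ v : V, v ≠ r ∧ c = din v} := by
  classical
  set step : V → V → Prop := fun a b => ∃ e : ι, src e = a ∧ tgt e = b with hstep
  -- single vertex cuts equal in-degree
  have hkey : ∀ v : V, cutVal (Finset.univ.erase v) = din v := by
    intro v
    rw [hcut, hdin]
    congr 1
    ext e
    simp only [Finset.mem_filter, Finset.mem_univ, true_and, Finset.mem_erase, and_true,
      not_not]
    constructor
    · exact fun h => h.2
    · intro ht
      exact ⟨fun hs => hacyc v (Relation.TransGen.single ⟨e, hs, ht⟩), ht⟩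
  have hwf : WellFounded (Relation.TransGen step) := by
    haveI : IsTrans V (Relation.TransGen step) := ⟨fun _ _ _ => Relation.TransGen.trans⟩
    haveI : IsIrrefl V (Relation.TransGen step) := ⟨hacyc⟩
    exact Finite.wellFounded_of_trans_of_irrefl _
  -- for any proper cut there is a single-vertex cut at most as big
  have hmin : ∀ U : Finset V, r ∈ U → U ≠ Finset.univ →
      ∃ v : V, v ≠ r ∧ din v ≤ cutVal U := by
    intro U hr hU
    have hW : {x : V | x ∉ U}.Nonempty := by
      by_contra h
      push_neg at h
      simp only [Set.not_nonempty_iff_eq_empty, Set.eq_empty_iff_forall_notMem,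
        Set.mem_setOf_eq, not_not] at h
      exact hU (Finset.eq_univ_iff_forall.mpr h)
    obtain ⟨v, hvW, hvmin⟩ := hwf.has_min _ hW
    refine ⟨v, fun h => hvW (h ▸ hr), ?_⟩
    rw [hdin, hcut]
    apply Finset.card_le_card
    intro e he
    simp only [Finset.mem_filter, Finset.mem_univ, true_and] at he ⊢
    have hsrc : src e ∈ U := by
      by_contra hs
      exact hvmin (src e) hs (Relation.TransGen.single ⟨e, rfl, he⟩)
    exact ⟨hsrc, he ▸ hvW⟩
  have hBA : {c : ℕ | ∃ v : V, v ≠ r ∧ c = cutVal (Finset.univ.erase v)} ⊆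
      {c : ℕ | ∃ U : Finset V, r ∈ U ∧ U ≠ Finset.univ ∧ c = cutVal U} := by
    rintro c ⟨v, hv, rfl⟩
    refine ⟨Finset.univ.erase v, Finset.mem_erase.mpr ⟨fun h => hv h.symm, Finset.mem_univ r⟩,
      ?_, rfl⟩
    intro h
    have hv' : v ∈ (Finset.univ : Finset V) := Finset.mem_univ v
    rw [← h] at hv'
    exact (Finset.mem_erase.mp hv').1 rfl
  constructor
  · rcases Set.eq_empty_or_nonempty
        {c : ℕ | ∃ U : Finset V, r ∈ U ∧ U ≠ Finset.univ ∧ c = cutVal U} with hA | hA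
    · have hB : {c : ℕ | ∃ v : V, v ≠ r ∧ c = cutVal (Finset.univ.erase v)} = ∅ :=
        Set.eq_empty_of_subset_empty (hA ▸ hBA)
      rw [hA, hB]
    · obtain ⟨U, hr, hU, hval⟩ := Nat.sInf_mem hA
      obtain ⟨v, hv, hle⟩ := hmin U hr hU
      have hBne : {c : ℕ | ∃ v : V, v ≠ r ∧ c = cutVal (Finset.univ.erase v)}.Nonempty :=
        ⟨cutVal (Finset.univ.erase v), v, hv, rfl⟩
      apply le_antisymm
      · exact Nat.sInf_le (hBA (Nat.sInf_mem hBne))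
      · calc sInf {c : ℕ | ∃ v : V, v ≠ r ∧ c = cutVal (Finset.univ.erase v)}
            ≤ cutVal (Finset.univ.erase v) := Nat.sInf_le ⟨v, hv, rfl⟩
          _ = din v := hkey v
          _ ≤ cutVal U := hle
          _ = _ := hval.symm
  · congr 1
    ext c
    simp only [Set.mem_setOf_eq, hkey]
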